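/- Let S ⊂ ℝ be a compact set with convex hull I = [a,b], and let φ : S → ℝ have bounded variation on S. Define the extension φ̃ : ℝ → ℝ by: φ̃ = φ on S; on each bounded open component (c,d) of I∖S (so c, d ∈ S), φ̃ is the linear interpolation between φ(c) and φ(d); φ̃(x) := lim_{t→a, t∈S} φ(t) for x < a; and φ̃(x) := lim_{t→b, t∈S} φ(t) for x > b (these one-sided limits exist since φ has bounded variation). Then V(φ̃, ℝ) = V(φ, S). -/

import Mathlib

open MeasureTheory Metric Complex Polynomial Filter Topology Asymptotics
open scoped Classical ENNReal

noncomputable section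

/-- The support of a Borel measure on `ℝ`: points all of whose neighborhoods have
positive measure. -/
def msupport (μ : Measure ℝ) : Set ℝ := {x : ℝ | ∀ ε > 0, 0 < μ (Metric.ball x ε)}

/-- A subset of `ℝ` viewed as a subset of `ℂ`. -/
def cemb (S : Set ℝ) : Set ℂ := (fun x : ℝ => (x : ℂ)) '' S

/-- Weak-star convergence of a sequence of measures on `ℂ`, tested against continuous
compactly supported functions. -/
def WeakStarTendsTo (ν : ℕ → Measure ℂ) (μ : Measure ℂ) : Prop :=
  ∀ f : ℂ → ℝ, Continuous f → HasCompactSupport f →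
    Tendsto (fun n => ∫ z, f z ∂(ν n)) atTop (𝓝 (∫ z, f z ∂μ))

/-- The logarithmic kernel `log (1/|z-w|)`. -/
def logKernel (z w : ℂ) : ℝ := Real.log (1 / ‖z - w‖)

/-- The logarithmic potential of a measure on `ℂ`. -/
def logPotential (μ : Measure ℂ) (z : ℂ) : ℝ := ∫ w, logKernel z w ∂μ

/-- A compactly supported measure has finite logarithmic energy iff the kernel is
integrable for the product measure. -/
def HasFiniteLogEnergy (μ : Measure ℂ) : Prop :=
  Integrable (fun p : ℂ × ℂ => logKernel p.1 p.2) (μ.prod μ)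

/-- The logarithmic energy `I[μ] = ∬ log (1/|z-w|) dμ dμ`. -/
def logEnergy (μ : Measure ℂ) : ℝ := ∫ p : ℂ × ℂ, logKernel p.1 p.2 ∂(μ.prod μ)

/-- A probability measure carried by the set `E`. -/
def IsProbOn (μ : Measure ℂ) (E : Set ℂ) : Prop :=
  IsProbabilityMeasure μ ∧ μ Eᶜ = 0

/-- `μ` is the (logarithmic) equilibrium measure of `E`: a probability measure on `E` of
finite energy minimizing the logarithmic energy. -/
def IsEquilibriumMeasure (E : Set ℂ) (μ : Measure ℂ) : Prop :=
  IsProbOn μ E ∧ HasFiniteLogEnergy μ ∧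
    ∀ ν : Measure ℂ, IsProbOn ν E → HasFiniteLogEnergy ν → logEnergy μ ≤ logEnergy ν

/-- Logarithmic capacity of a compact set: `exp(-inf I[μ])`, the infimum over probability
measures on the set (`0` if the set is polar). -/
def capCompact (K : Set ℂ) : ℝ :=
  sSup ((fun μ : Measure ℂ => Real.exp (-logEnergy μ)) ''
    {μ : Measure ℂ | IsProbOn μ K ∧ HasFiniteLogEnergy μ})

/-- Logarithmic capacity of an arbitrary set: supremum of the capacities of its
compact subsets. -/
def cap (E : Set ℂ) : ℝ :=
  sSup (capCompact '' {K : Set ℂ | IsCompact K ∧ K ⊆ E})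

/-- Harmonicity on an open set via the mean value property. -/
def HarmonicOnMV (h : ℂ → ℝ) (U : Set ℂ) : Prop :=
  ContinuousOn h U ∧ ∀ z r, 0 < r → Metric.closedBall z r ⊆ U →
    h z = (2 * Real.pi)⁻¹ *
      ∫ θ in (0:ℝ)..(2 * Real.pi), h (z + (r : ℂ) * Complex.exp ((θ : ℂ) * Complex.I))

/-- The complex measure `dλ = e^{iφ} dμ` belongs to the class `M`. -/
structure ClassM (μ : Measure ℝ) (φ : ℝ → ℝ) : Prop where
  finite : IsFiniteMeasure μ
  compact_supp : IsCompact (msupport μ)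
  infinite_supp : (msupport μ).Infinite
  meas : Measurable φ
  bv : BoundedVariationOn φ (msupport μ)
  regular : ∃ ν : Measure ℂ, IsEquilibriumMeasure (cemb (msupport μ)) ν ∧
      Continuous (logPotential ν)
  density : ∃ c > (0:ℝ), ∃ L > (0:ℝ), ∀ x ∈ msupport μ, ∀ δ : ℝ, δ ∈ Set.Ioo (0:ℝ) 1 →
      ENNReal.ofReal (c * δ ^ L) ≤ μ (Set.Icc (x - δ) (x + δ))

/-- The monic polynomial `z ↦ ∏ (z - ζ j)`, as a function. -/
def vfun {k : ℕ} (ζ : Fin k → ℂ) (z : ℂ) : ℂ := ∏ j, (z - ζ j)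

/-- Normalized counting measure of a finite family of points. -/
def countMeas {k : ℕ} (ζ : Fin k → ℂ) : Measure ℂ :=
  ((k : ℝ≥0∞))⁻¹ • ∑ j, Measure.dirac (ζ j)

/-- Counting measure of the roots of a polynomial (with multiplicity), normalized by `1/n`. -/
def rootMeasure (n : ℕ) (q : Polynomial ℂ) : Measure ℂ :=
  ((n : ℝ≥0∞))⁻¹ • (q.roots.map Measure.dirac).sum

/-- Denominator of the reduced form of the rational function `p/q`. -/
def redDenom (p q : Polynomial ℂ) : Polynomial ℂ := q / EuclideanDomain.gcd p q

/-- Numerator of the reduced form of the rational function `p/q`. -/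
def redNum (p q : Polynomial ℂ) : Polynomial ℂ := p / EuclideanDomain.gcd p q

/-- Value at `z` of the rational function `p/q`. -/
def ratEval (p q : Polynomial ℂ) (z : ℂ) : ℂ := (redNum p q).eval z / (redDenom p q).eval z

/-- Counting measure of the poles (with multiplicity) of the rational function `p/q`,
normalized by `1/n`. -/
def poleMeasure (n : ℕ) (p q : Polynomial ℂ) : Measure ℂ := rootMeasure n (redDenom p q)

/-- The Cauchy transform of `e^{iφ} dμ` plus the rational function `P/Q`. -/
def Fmeas (μ : Measure ℝ) (φ : ℝ → ℝ) (P Q : Polynomial ℂ) (z : ℂ) : ℂ :=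
  (∫ t, Complex.exp (Complex.I * (φ t : ℂ)) / (z - (t : ℂ)) ∂μ) + P.eval z / Q.eval z

/-- The Cauchy transform of `ρ dμ` plus the rational function `P/Q`. -/
def Fdens (μ : Measure ℝ) (ρ : ℝ → ℂ) (P Q : Polynomial ℂ) (z : ℂ) : ℂ :=
  (∫ t, ρ t / (z - (t : ℂ)) ∂μ) + P.eval z / Q.eval z

/-- `(p, q)` is a multipoint Padé pair of order `n` for `F` (holomorphic on `Ω`) with
interpolation polynomial `v`:  `deg p ≤ n`, `deg q ≤ n`, `q ≠ 0`, `(qF - p)/v` extends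
holomorphically to `Ω`, and the extension is `O(1/z^{n+1})` at infinity. -/
def IsPadePair (F : ℂ → ℂ) (Ω : Set ℂ) (n : ℕ) (v : ℂ → ℂ) (p q : Polynomial ℂ) : Prop :=
  p.natDegree ≤ n ∧ q.natDegree ≤ n ∧ q ≠ 0 ∧
  ∃ g : ℂ → ℂ, DifferentiableOn ℂ g Ω ∧
    (∀ z ∈ Ω, v z ≠ 0 → g z = (q.eval z * F z - p.eval z) / v z) ∧
    g =O[Bornology.cobounded ℂ] fun z => (z ^ (n + 1))⁻¹

/-- Principal branch of the argument, with the convention `A(0) = π`. -/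
def argA (z : ℂ) : ℝ := if z = 0 then Real.pi else Complex.arg z

/-- The angle in which the interval `[a,b]` is seen at `ξ`. -/
def ang (ξ : ℂ) (a b : ℝ) : ℝ := |argA ((a : ℂ) - ξ) - argA ((b : ℂ) - ξ)|

/-- The angle function of a system of intervals. -/
def theta {m : ℕ} (a b : Fin m → ℝ) (ξ : ℂ) : ℝ := ∑ j, ang ξ (a j) (b j)

/-- An admissible interpolation scheme: points `ζ n` lie in a compact set `K₀` disjoint
from `Ih`, normalized counting measures converge weak-star to a probability measure `σ`
of finite logarithmic energy, and the derivatives of `v_{2n}/|v_{2n}|` are uniformly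
bounded on `Ih`. -/
structure Admissible (K₀ : Set ℂ) (Ih : Set ℝ) (ζ : ∀ n : ℕ, Fin (2 * n) → ℂ)
    (σ : Measure ℂ) : Prop where
  compact : IsCompact K₀
  disjI : ∀ x ∈ Ih, (x : ℂ) ∉ K₀
  mem : ∀ n j, ζ n j ∈ K₀
  prob : IsProbabilityMeasure σ
  energy : HasFiniteLogEnergy σ
  wstar : WeakStarTendsTo (fun n => countMeas (ζ n)) σ
  deriv_bound : ∃ C : ℝ, ∀ n, ∀ x ∈ Ih,
    ‖deriv (fun y : ℝ => vfun (ζ n) (y : ℂ) / ((‖vfun (ζ n) (y : ℂ)‖ : ℝ) : ℂ)) x‖ ≤ C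

/-- A uniform bound `V_A` on the variation of continuous branches of the argument of
`v_{2n}` on `Ih`. -/
def VarBound (Ih : Set ℝ) (ζ : ∀ n : ℕ, Fin (2 * n) → ℂ) (VA : ℝ) : Prop :=
  ∀ n, ∃ ψ : ℝ → ℝ, ContinuousOn ψ Ih ∧
    (∀ x ∈ Ih, vfun (ζ n) (x : ℂ)
      = ((‖vfun (ζ n) (x : ℂ)‖ : ℝ) : ℂ) * Complex.exp (Complex.I * (ψ x : ℂ))) ∧
    (eVariationOn ψ Ih).toReal ≤ VA

/-- The orthogonality relation `∫ t^k Q_s(t) q_n(t) / v_{2n}(t) dλ(t) = 0` for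
`dλ = e^{iφ} dμ`. -/
def OrthRel (μ : Measure ℝ) (φ : ℝ → ℝ) (Q : Polynomial ℂ) {k2 : ℕ} (ζ : Fin k2 → ℂ)
    (qn : Polynomial ℂ) (k : ℕ) : Prop :=
  ∫ t, (t : ℂ) ^ k * Q.eval (t : ℂ) * qn.eval (t : ℂ) / vfun ζ (t : ℂ)
      * Complex.exp (Complex.I * (φ t : ℂ)) ∂μ = 0

/-- The upper characteristic `m̄(z)` of a sequence of (multi)sets of poles. -/
def upperChar (poles : ℕ → Multiset ℂ) (z : ℂ) : ℕ∞ :=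
  ⨅ (U : Set ℂ) (_ : IsOpen U) (_ : z ∈ U),
    Filter.limsup (fun n => ((Multiset.filter (fun w => w ∈ U) (poles n)).card : ℕ∞))
      Filter.atTop

/-- Subharmonicity on an open set for `[-∞,∞)`-valued functions: upper semicontinuous,
not identically `-∞` on any connected component, and satisfying the sub-mean value
inequality (tested against integrable majorants of the values on circles). -/
def SubharmonicOn (u : ℂ → EReal) (D : Set ℂ) : Prop :=
  UpperSemicontinuousOn u D ∧
  (∀ z ∈ D, u z ≠ ⊤) ∧
  (∀ z ∈ D, ∃ w ∈ connectedComponentIn D z, u w ≠ ⊥) ∧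
  ∀ z r, 0 < r → Metric.closedBall z r ⊆ D →
    ∀ g : ℝ → ℝ, IntervalIntegrable g MeasureTheory.volume 0 (2 * Real.pi) →
      (∀ θ ∈ Set.Icc (0:ℝ) (2 * Real.pi),
        u (z + (r : ℂ) * Complex.exp ((θ : ℂ) * Complex.I)) ≤ (g θ : EReal)) →
      u z ≤ (((2 * Real.pi)⁻¹ * ∫ θ in (0:ℝ)..(2 * Real.pi), g θ : ℝ) : EReal)

end

/-- The extension `φ̃` of `φ : S → ℝ` to `ℝ`: equal to `φ` on `S`, linear on the bounded
components of `I ∖ S`, and constant (with the boundary values) off `I = [inf S, sup S]`. -/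
noncomputable def extBV (S : Set ℝ) (φ : ℝ → ℝ) (x : ℝ) : ℝ :=
  if x ∈ S then φ x
  else if x < sInf S then φ (sInf S)
  else if sSup S < x then φ (sSup S)
  else
    φ (sSup (S ∩ Set.Iic x)) +
      (φ (sInf (S ∩ Set.Ici x)) - φ (sSup (S ∩ Set.Iic x))) * (x - sSup (S ∩ Set.Iic x)) /
        (sInf (S ∩ Set.Ici x) - sSup (S ∩ Set.Iic x))

section BVextension

open Set

lemma extBV_eqOn (S : Set ℝ) (φ : ℝ → ℝ) : Set.EqOn (extBV S φ) φ S := fun x hx => by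
  simp only [extBV, if_pos hx]

lemma extBV_sub (S : Set ℝ) (φ ψ : ℝ → ℝ) (x : ℝ) :
    extBV S (fun y => φ y - ψ y) x = extBV S φ x - extBV S ψ x := by
  unfold extBV
  split_ifs <;> ring

/-- Case description of `extBV`. -/
lemma extBV_cases {S : Set ℝ} (hSc : IsCompact S) (hSne : S.Nonempty) (m : ℝ → ℝ) (x : ℝ) :
    (x ∈ S ∧ extBV S m x = m x) ∨
    (x < sInf S ∧ extBV S m x = m (sInf S)) ∨
    (sSup S < x ∧ extBV S m x = m (sSup S)) ∨
    (∃ c d, c ∈ S ∧ d ∈ S ∧ c < x ∧ x < d ∧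
      (∀ z ∈ S, z ≤ x → z ≤ c) ∧ (∀ z ∈ S, x ≤ z → d ≤ z) ∧
      extBV S m x = m c + (m d - m c) * (x - c) / (d - c)) := by
  by_cases hxS : x ∈ S
  · exact Or.inl ⟨hxS, by simp only [extBV, if_pos hxS]⟩
  by_cases hxa : x < sInf S
  · exact Or.inr (Or.inl ⟨hxa, by simp only [extBV, if_neg hxS, if_pos hxa]⟩)
  by_cases hbx : sSup S < x
  · exact Or.inr (Or.inr (Or.inl ⟨hbx, by
      simp only [extBV, if_neg hxS, if_neg hxa, if_pos hbx]⟩))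
  refine Or.inr (Or.inr (Or.inr ?_))
  have hax : sInf S ≤ x := not_lt.mp hxa
  have hxb : x ≤ sSup S := not_lt.mp hbx
  have ha : sInf S ∈ S := hSc.sInf_mem hSne
  have hb : sSup S ∈ S := hSc.sSup_mem hSne
  have hneL : (S ∩ Set.Iic x).Nonempty := ⟨sInf S, ha, hax⟩
  have hbddL : BddAbove (S ∩ Set.Iic x) := hSc.bddAbove.mono inter_subset_left
  have hclL : IsClosed (S ∩ Set.Iic x) := hSc.isClosed.inter isClosed_Iic
  have hcL := hclL.csSup_mem hneL hbddL
  have hneR : (S ∩ Set.Ici x).Nonempty := ⟨sSup S, hb, hxb⟩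
  have hbddR : BddBelow (S ∩ Set.Ici x) := hSc.bddBelow.mono inter_subset_left
  have hclR : IsClosed (S ∩ Set.Ici x) := hSc.isClosed.inter isClosed_Ici
  have hcR := hclR.csInf_mem hneR hbddR
  refine ⟨sSup (S ∩ Set.Iic x), sInf (S ∩ Set.Ici x), hcL.1, hcR.1, ?_, ?_, ?_, ?_, ?_⟩
  · exact lt_of_le_of_ne hcL.2 (fun h => hxS (h ▸ hcL.1))
  · exact lt_of_le_of_ne hcR.2 (fun h => hxS (h ▸ hcR.1))
  · exact fun z hz hzx => le_csSup hbddL ⟨hz, hzx⟩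
  · exact fun z hz hxz => csInf_le hbddR ⟨hz, hxz⟩
  · simp only [extBV, if_neg hxS, if_neg hxa, if_neg hbx]

lemma extBV_le_right {S : Set ℝ} (hSc : IsCompact S) (hSne : S.Nonempty) {m : ℝ → ℝ}
    (hm : MonotoneOn m S) (x z : ℝ) (hz : z ∈ S) (hxz : x ≤ z) :
    extBV S m x ≤ m z := by
  have ha : sInf S ∈ S := hSc.sInf_mem hSne
  rcases extBV_cases hSc hSne m x with ⟨hxS, he⟩ | ⟨hxa, he⟩ | ⟨hbx, he⟩ |
    ⟨c, d, hcS, hdS, hcx, hxd, _, hdmin, he⟩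
  · rw [he]; exact hm hxS hz hxz
  · rw [he]; exact hm ha hz (csInf_le hSc.bddBelow hz)
  · exact absurd hxz (not_le.mpr (lt_of_le_of_lt (le_csSup hSc.bddAbove hz) hbx))
  · rw [he]
    have hdz : d ≤ z := hdmin z hz hxz
    have hcd : c < d := hcx.trans hxd
    have hmcd : m c ≤ m d := hm hcS hdS hcd.le
    have h1 : (x - c) / (d - c) ≤ 1 := (div_le_one (by linarith)).mpr (by linarith)
    have h2 : (0:ℝ) ≤ (x - c) / (d - c) := div_nonneg (by linarith) (by linarith)
    have : m c + (m d - m c) * (x - c) / (d - c) ≤ m d := by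
      rw [mul_div_assoc]
      nlinarith
    exact this.trans (hm hdS hz hdz)

lemma extBV_ge_left {S : Set ℝ} (hSc : IsCompact S) (hSne : S.Nonempty) {m : ℝ → ℝ}
    (hm : MonotoneOn m S) (x z : ℝ) (hz : z ∈ S) (hzx : z ≤ x) :
    m z ≤ extBV S m x := by
  have hb : sSup S ∈ S := hSc.sSup_mem hSne
  rcases extBV_cases hSc hSne m x with ⟨hxS, he⟩ | ⟨hxa, he⟩ | ⟨hbx, he⟩ |
    ⟨c, d, hcS, hdS, hcx, hxd, hcmax, _, he⟩
  · rw [he]; exact hm hz hxS hzx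
  · exact absurd hzx (not_le.mpr (lt_of_lt_of_le hxa (csInf_le hSc.bddBelow hz)))
  · rw [he]; exact hm hz hb (le_csSup hSc.bddAbove hz)
  · rw [he]
    have hzc : z ≤ c := hcmax z hz hzx
    have hcd : c < d := hcx.trans hxd
    have hmcd : m c ≤ m d := hm hcS hdS hcd.le
    have h2 : (0:ℝ) ≤ (x - c) / (d - c) := div_nonneg (by linarith) (by linarith)
    have : m c ≤ m c + (m d - m c) * (x - c) / (d - c) := by
      rw [mul_div_assoc]
      nlinarith
    exact (hm hz hcS hzc).trans this

lemma extBV_monotone {S : Set ℝ} (hSc : IsCompact S) (hSne : S.Nonempty) {m : ℝ → ℝ}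
    (hm : MonotoneOn m S) : Monotone (extBV S m) := by
  intro x y hxy
  have ha : sInf S ∈ S := hSc.sInf_mem hSne
  have hb : sSup S ∈ S := hSc.sSup_mem hSne
  have hab : sInf S ≤ sSup S := csInf_le hSc.bddBelow hb
  by_cases hmid : ∃ z ∈ S, x ≤ z ∧ z ≤ y
  · obtain ⟨z, hz, h1, h2⟩ := hmid
    exact (extBV_le_right hSc hSne hm x z hz h1).trans (extBV_ge_left hSc hSne hm y z hz h2)
  push_neg at hmid
  have hxS : x ∉ S := fun h => absurd hxy (not_le.mpr (hmid x h le_rfl))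
  have hyS : y ∉ S := fun h => lt_irrefl y (hmid y h hxy)
  rcases extBV_cases hSc hSne m x with ⟨h, _⟩ | ⟨hxa, hex⟩ | ⟨hbx, hex⟩ |
    ⟨c, d, hcS, hdS, hcx, hxd, hcmax, hdmin, hex⟩
  · exact absurd h hxS
  · -- x < sInf S ; then y < sInf S as well
    have hya : y < sInf S := hmid (sInf S) ha hxa.le
    rcases extBV_cases hSc hSne m y with ⟨h, _⟩ | ⟨_, hey⟩ | ⟨hby, _⟩ |
      ⟨c', d', hc'S, _, hc'y, _, _, _, _⟩
    · exact absurd h hyS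
    · rw [hex, hey]
    · linarith
    · linarith [csInf_le hSc.bddBelow hc'S]
  · -- sSup S < x
    rcases extBV_cases hSc hSne m y with ⟨h, _⟩ | ⟨hya, _⟩ | ⟨_, hey⟩ |
      ⟨c', d', _, hd'S, _, hyd', _, _, _⟩
    · exact absurd h hyS
    · linarith
    · rw [hex, hey]
    · linarith [le_csSup hSc.bddAbove hd'S]
  · -- x in the gap (c, d); then y is in the same gap
    have hyd : y < d := hmid d hdS hxd.le
    rcases extBV_cases hSc hSne m y with ⟨h, _⟩ | ⟨hya, _⟩ | ⟨hby, _⟩ |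
      ⟨c', d', hc'S, hd'S, hc'y, hyd', hcmax', hdmin', hey⟩
    · exact absurd h hyS
    · linarith [csInf_le hSc.bddBelow hcS]
    · linarith [le_csSup hSc.bddAbove hdS]
    · have hc'x : c' ≤ x := by
        rcases le_or_gt c' x with h | h
        · exact h
        · exact absurd (hdmin c' hc'S h.le) (not_le.mpr (by linarith))
      have hcc' : c' = c := le_antisymm (hcmax c' hc'S hc'x) (hcmax' c hcS (by linarith))
      have hdd' : d' = d := le_antisymm (hdmin' d hdS hyd.le) (hdmin d' hd'S (by linarith))
      rw [hex, hey, hcc', hdd']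
      have hcd : c < d := hcx.trans hxd
      have hdc : (0:ℝ) < d - c := by linarith
      have hmcd : m c ≤ m d := hm hcS hdS hcd.le
      have ht : (x - c) / (d - c) ≤ (y - c) / (d - c) := by
        gcongr
      rw [mul_div_assoc, mul_div_assoc]
      nlinarith [mul_le_mul_of_nonneg_left ht (sub_nonneg.mpr hmcd)]

lemma extBV_bounds {S : Set ℝ} (hSc : IsCompact S) (hSne : S.Nonempty) {m : ℝ → ℝ}
    (hm : MonotoneOn m S) (x : ℝ) :
    m (sInf S) ≤ extBV S m x ∧ extBV S m x ≤ m (sSup S) := by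
  have ha : sInf S ∈ S := hSc.sInf_mem hSne
  have hb : sSup S ∈ S := hSc.sSup_mem hSne
  have hab : sInf S ≤ sSup S := csInf_le hSc.bddBelow hb
  constructor
  · rcases le_or_gt (sInf S) x with h | h
    · exact extBV_ge_left hSc hSne hm x (sInf S) ha h
    · have hxS : x ∉ S := fun hx => absurd (csInf_le hSc.bddBelow hx) (not_le.mpr h)
      have : extBV S m x = m (sInf S) := by simp only [extBV, if_neg hxS, if_pos h]
      exact this.ge
  · rcases le_or_gt x (sSup S) with h | h
    · exact extBV_le_right hSc hSne hm x (sSup S) hb h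
    · have hxS : x ∉ S := fun hx => absurd (le_csSup hSc.bddAbove hx) (not_le.mpr h)
      have hxa : ¬ x < sInf S := not_lt.mpr (hab.trans h.le)
      have : extBV S m x = m (sSup S) := by
        simp only [extBV, if_neg hxS, if_neg hxa, if_pos h]
      exact this.le

lemma evar_univ_le_of_monotone {g : ℝ → ℝ} (hg : Monotone g) {A B : ℝ}
    (hA : ∀ x, A ≤ g x) (hB : ∀ x, g x ≤ B) :
    eVariationOn g (Set.univ : Set ℝ) ≤ ENNReal.ofReal (B - A) := by
  apply iSup_le
  rintro ⟨n, ⟨u, hu, -⟩⟩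
  calc
    (∑ i ∈ Finset.range n, edist (g (u (i + 1))) (g (u i))) =
        ∑ i ∈ Finset.range n, ENNReal.ofReal (g (u (i + 1)) - g (u i)) := by
      refine Finset.sum_congr rfl fun i _ => ?_
      have hnn : 0 ≤ g (u (i + 1)) - g (u i) := sub_nonneg_of_le (hg (hu (Nat.le_succ i)))
      rw [edist_dist, _root_.Real.dist_eq, _root_.abs_of_nonneg hnn]
    _ = ENNReal.ofReal (∑ i ∈ Finset.range n, (g (u (i + 1)) - g (u i))) := by
      rw [ENNReal.ofReal_sum_of_nonneg]
      exact fun i _ => sub_nonneg_of_le (hg (hu (Nat.le_succ i)))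
    _ = ENNReal.ofReal (g (u n) - g (u 0)) := by rw [Finset.sum_range_sub fun i => g (u i)]
    _ ≤ ENNReal.ofReal (B - A) := ENNReal.ofReal_le_ofReal (sub_le_sub (hB _) (hA _))

lemma evar_sub_le (f g : ℝ → ℝ) (s : Set ℝ) :
    eVariationOn (fun x => f x - g x) s ≤ eVariationOn f s + eVariationOn g s := by
  apply iSup_le
  rintro ⟨n, ⟨u, hu, us⟩⟩
  calc
    (∑ i ∈ Finset.range n, edist (f (u (i + 1)) - g (u (i + 1))) (f (u i) - g (u i))) ≤
        ∑ i ∈ Finset.range n,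
          (edist (f (u (i + 1))) (f (u i)) + edist (g (u (i + 1))) (g (u i))) := by
      refine Finset.sum_le_sum fun i _ => ?_
      rw [edist_dist, edist_dist, edist_dist]
      exact le_trans (ENNReal.ofReal_le_ofReal (dist_sub_sub_le _ _ _ _))
        ENNReal.ofReal_add_le
    _ = (∑ i ∈ Finset.range n, edist (f (u (i + 1))) (f (u i))) +
          ∑ i ∈ Finset.range n, edist (g (u (i + 1))) (g (u i)) := Finset.sum_add_distrib
    _ ≤ _ := add_le_add (eVariationOn.sum_le (f := f) (n := n) hu us) (eVariationOn.sum_le (f := g) (n := n) hu us)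

lemma jordan_mono {S : Set ℝ} (hSc : IsCompact S) (hSne : S.Nonempty) {φ : ℝ → ℝ}
    (hφ : BoundedVariationOn φ S) :
    MonotoneOn (fun x => (variationOnFromTo φ S (sInf S) x + φ x) / 2) S ∧
    MonotoneOn (fun x => (variationOnFromTo φ S (sInf S) x - φ x) / 2) S := by
  have hloc : LocallyBoundedVariationOn φ S := hφ.locallyBoundedVariationOn
  have ha : sInf S ∈ S := hSc.sInf_mem hSne
  have key : ∀ x ∈ S, ∀ y ∈ S, x ≤ y → |φ y - φ x| ≤
      variationOnFromTo φ S (sInf S) y - variationOnFromTo φ S (sInf S) x := by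
    intro x hx y hy hxy
    have hadd := variationOnFromTo.add hloc ha hx hy
    have h2 : variationOnFromTo φ S x y = (eVariationOn φ (S ∩ Set.Icc x y)).toReal :=
      variationOnFromTo.eq_of_le φ S hxy
    have hbv : BoundedVariationOn φ (S ∩ Set.Icc x y) := hφ.mono inter_subset_left
    have hd : dist (φ y) (φ x) ≤ (eVariationOn φ (S ∩ Set.Icc x y)).toReal :=
      hbv.dist_le ⟨hy, hxy, le_refl y⟩ ⟨hx, le_refl x, hxy⟩
    rw [Real.dist_eq] at hd
    linarith
  constructor <;> intro x hx y hy hxy <;>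
  · have h := key x hx y hy hxy
    rw [abs_le] at h
    simp only
    linarith [h.1, h.2]

end BVextension

/-- The canonical extension `φ̃` of a function `φ` of bounded variation
on a compact set `S ⊂ ℝ` satisfies `V(φ̃, ℝ) = V(φ, S)`. -/
theorem stmt16
    (S : Set ℝ) (hSc : IsCompact S) (hSne : S.Nonempty)
    (φ : ℝ → ℝ) (hφ : BoundedVariationOn φ S) :
    eVariationOn (extBV S φ) Set.univ = eVariationOn φ S := by

  have ha : sInf S ∈ S := hSc.sInf_mem hSne
  have hb : sSup S ∈ S := hSc.sSup_mem hSne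
  have hab : sInf S ≤ sSup S := csInf_le hSc.bddBelow hb
  refine le_antisymm ?_ ?_
  · set p : ℝ → ℝ := fun x => (variationOnFromTo φ S (sInf S) x + φ x) / 2 with hpdef
    set q : ℝ → ℝ := fun x => (variationOnFromTo φ S (sInf S) x - φ x) / 2 with hqdef
    obtain ⟨hmp, hmq⟩ := jordan_mono hSc hSne hφ
    have h1 : extBV S φ = fun x => extBV S p x - extBV S q x := by
      funext x
      rw [← extBV_sub]
      congr 1
      funext y
      simp only [hpdef, hqdef]
      ring
    have bp := extBV_bounds hSc hSne hmp
    have bq := extBV_bounds hSc hSne hmq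
    have hple : eVariationOn (extBV S p) Set.univ
        ≤ ENNReal.ofReal (p (sSup S) - p (sInf S)) :=
      evar_univ_le_of_monotone (extBV_monotone hSc hSne hmp)
        (fun x => (bp x).1) (fun x => (bp x).2)
    have hqle : eVariationOn (extBV S q) Set.univ
        ≤ ENNReal.ofReal (q (sSup S) - q (sInf S)) :=
      evar_univ_le_of_monotone (extBV_monotone hSc hSne hmq)
        (fun x => (bq x).1) (fun x => (bq x).2)
    rw [h1]
    calc eVariationOn (fun x => extBV S p x - extBV S q x) Set.univ
        ≤ eVariationOn (extBV S p) Set.univ + eVariationOn (extBV S q) Set.univ :=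
          evar_sub_le _ _ _
      _ ≤ ENNReal.ofReal (p (sSup S) - p (sInf S))
            + ENNReal.ofReal (q (sSup S) - q (sInf S)) := add_le_add hple hqle
      _ = ENNReal.ofReal ((p (sSup S) - p (sInf S)) + (q (sSup S) - q (sInf S))) :=
          (ENNReal.ofReal_add (sub_nonneg.mpr (hmp ha hb hab))
            (sub_nonneg.mpr (hmq ha hb hab))).symm
      _ = ENNReal.ofReal (variationOnFromTo φ S (sInf S) (sSup S)) := by
          congr 1
          have h0 : variationOnFromTo φ S (sInf S) (sInf S) = 0 :=
            variationOnFromTo.self φ S (sInf S)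
          simp only [hpdef, hqdef]
          linarith
      _ = eVariationOn φ S := by
          rw [variationOnFromTo.eq_of_le φ S hab]
          have hss : S ∩ Set.Icc (sInf S) (sSup S) = S :=
            Set.inter_eq_self_of_subset_left
              (fun z hz => ⟨csInf_le hSc.bddBelow hz, le_csSup hSc.bddAbove hz⟩)
          rw [hss, ENNReal.ofReal_toReal hφ]
  · calc eVariationOn φ S = eVariationOn (extBV S φ) S :=
          (eVariationOn.eq_of_eqOn (extBV_eqOn S φ)).symm
      _ ≤ eVariationOn (extBV S φ) Set.univ := eVariationOn.mono _ (Set.subset_univ S)
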